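/- Let R be a commutative ring, R[[t]] the power series ring, and let N ⊆ M be finite projective R[[t]]-modules with tM ⊆ N ⊆ M and M/tM projective over R, N projective over R[[t]]. Then the R-modules N/tM and M/N are finite projective over R, and there are short exact sequences of R-modules 0 → tM/tN → N/tN → N/tM → 0 and 0 → N/tM → M/tM → M/N → 0. -/

import Mathlib

/-- Multiplication of a submodule by the ideal `(t) = (X)` of `R[[t]]`. -/
noncomputable def tmul {R : Type*} [CommRing R] {M : Type*} [AddCommGroup M]
    [Module (PowerSeries R) M] (P : Submodule (PowerSeries R) M) :
    Submodule (PowerSeries R) M :=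
  Ideal.span {(PowerSeries.X : PowerSeries R)} • P

open PowerSeries Pointwise

namespace Stmt17Aux

variable {R : Type*} [CommRing R]

lemma X_mul_cancel {f : PowerSeries R} (h : (X : PowerSeries R) * f = 0) : f = 0 := by
  ext n
  have h1 := congrArg (coeff (R := R) (n + 1)) h
  rw [coeff_succ_X_mul] at h1
  simpa using h1

section Mod
variable {M : Type*} [AddCommGroup M] [Module (PowerSeries R) M]

lemma X_smul_inj [Module.Projective (PowerSeries R) M] {p : M}
    (h : (X : PowerSeries R) • p = 0) : p = 0 := by
  obtain ⟨s, hs⟩ := Module.projective_def.mp (inferInstance : Module.Projective (PowerSeries R) M)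
  have h2 : (X : PowerSeries R) • s p = 0 := by rw [← map_smul, h, map_zero]
  have h3 : s p = 0 := by
    apply Finsupp.ext; intro a
    apply X_mul_cancel
    have h5 := congrArg (fun g : M →₀ PowerSeries R => g a) h2
    simpa [smul_eq_mul] using h5
  have h6 := hs p
  rw [h3, map_zero] at h6
  exact h6.symm

lemma X_smul_mem_tmul (P : Submodule (PowerSeries R) M) {m : M} (hm : m ∈ P) :
    (X : PowerSeries R) • m ∈ tmul P :=
  Submodule.smul_mem_smul (Submodule.mem_span_singleton_self _) hm

lemma exists_of_mem_tmul {P : Submodule (PowerSeries R) M} {x : M} (hx : x ∈ tmul P) :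
    ∃ p, p ∈ P ∧ (X : PowerSeries R) • p = x := by
  rw [tmul, Submodule.ideal_span_singleton_smul] at hx
  obtain ⟨p, hp, rfl⟩ := Set.mem_smul_set.mp hx
  exact ⟨p, hp, rfl⟩

lemma tmul_mono {P P' : Submodule (PowerSeries R) M} (h : P ≤ P') : tmul P ≤ tmul P' :=
  Submodule.smul_mono le_rfl h

end Mod

section Killed
variable {V : Type*} [AddCommGroup V] [Module (PowerSeries R) V] [Module R V]
  [IsScalarTower R (PowerSeries R) V]

lemma smul_eq_const (hV : ∀ v : V, (X : PowerSeries R) • v = 0) (f : PowerSeries R) (v : V) :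
    f • v = (constantCoeff f) • v := by
  obtain ⟨g, hg⟩ := X_dvd_iff.mpr
    (show constantCoeff (f - C (constantCoeff f)) = 0 by simp)
  have h1 : f • v - (C (constantCoeff f)) • v = 0 := by
    rw [← sub_smul, hg, mul_smul, hV]
  have h2 : (C (constantCoeff f)) • v = (constantCoeff f) • v := by
    rw [← algebraMap_smul (PowerSeries R) ((constantCoeff) f) v]
    congr 1
  rw [← h2]
  exact sub_eq_zero.mp h1

def RtoS {W : Type*} [AddCommGroup W] [Module (PowerSeries R) W] [Module R W]
    [IsScalarTower R (PowerSeries R) W]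
    (hV : ∀ v : V, (X : PowerSeries R) • v = 0) (hW : ∀ w : W, (X : PowerSeries R) • w = 0)
    (φ : V →ₗ[R] W) : V →ₗ[PowerSeries R] W where
  toFun := φ
  map_add' := φ.map_add
  map_smul' f v := by
    simp only [RingHom.id_apply]
    rw [smul_eq_const hV, smul_eq_const hW, map_smul]

lemma finite_of_killed (hV : ∀ v : V, (X : PowerSeries R) • v = 0)
    [Module.Finite (PowerSeries R) V] : Module.Finite R V := by
  obtain ⟨s, hs⟩ := Module.finite_def.mp ‹Module.Finite (PowerSeries R) V›
  refine Module.finite_def.mpr ⟨s, ?_⟩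
  rw [eq_top_iff]
  rintro v -
  have hv : v ∈ Submodule.span (PowerSeries R) (s : Set V) := hs ▸ Submodule.mem_top
  refine Submodule.span_induction (p := fun x _ => x ∈ Submodule.span R (s : Set V))
    (fun x h => Submodule.subset_span h) (Submodule.zero_mem _)
    (fun x y _ _ hx hy => Submodule.add_mem _ hx hy) ?_ hv
  intro a x _ hx
  rw [smul_eq_const hV]
  exact Submodule.smul_mem _ _ hx

noncomputable def divFun {Q' : Type*} [AddCommGroup Q'] [Module R Q']
    (hinj : ∀ p : V, (X : PowerSeries R) • p = 0 → p = 0)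
    (τ : Q' →ₗ[R] V) (hτ : ∀ q, ∃ p : V, (X : PowerSeries R) • p = τ q) : Q' →ₗ[R] V where
  toFun q := (hτ q).choose
  map_add' a b := by
    have ha := (hτ a).choose_spec
    have hb := (hτ b).choose_spec
    have hab := (hτ (a + b)).choose_spec
    have h : (X : PowerSeries R) • ((hτ (a + b)).choose - ((hτ a).choose + (hτ b).choose)) = 0 := by
      rw [smul_sub, smul_add, ha, hb, hab, map_add, sub_self]
    have h2 := hinj _ h
    rwa [sub_eq_zero] at h2
  map_smul' r a := by
    have ha := (hτ a).choose_spec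
    have hra := (hτ (r • a)).choose_spec
    simp only [RingHom.id_apply]
    have hcomm : (X : PowerSeries R) • (r • (hτ a).choose)
        = r • ((X : PowerSeries R) • (hτ a).choose) := by
      rw [← algebraMap_smul (PowerSeries R) r ((hτ a).choose),
        ← algebraMap_smul (PowerSeries R) r ((X : PowerSeries R) • (hτ a).choose),
        smul_smul, smul_smul, mul_comm]
    have h : (X : PowerSeries R) • ((hτ (r • a)).choose - r • (hτ a).choose) = 0 := by
      rw [smul_sub, hra, hcomm, ha, map_smul, sub_self]
    have h2 := hinj _ h
    rwa [sub_eq_zero] at h2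

lemma divFun_spec {Q' : Type*} [AddCommGroup Q'] [Module R Q']
    (hinj : ∀ p : V, (X : PowerSeries R) • p = 0 → p = 0)
    (τ : Q' →ₗ[R] V) (hτ : ∀ q, ∃ p : V, (X : PowerSeries R) • p = τ q) (q : Q') :
    (X : PowerSeries R) • (divFun hinj τ hτ q) = τ q := (hτ q).choose_spec

end Killed

section Q1

variable {M : Type*} [AddCommGroup M] [Module (PowerSeries R) M] [Module R M]
    [IsScalarTower R (PowerSeries R) M]

/-- The constant-coefficient map as an `R`-linear map. -/
noncomputable def cLin : PowerSeries R →ₗ[R] R where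
  toFun := constantCoeff
  map_add' := map_add _
  map_smul' r f := by simp [PowerSeries.constantCoeff_smul, smul_eq_mul]

lemma projQ1 (N : Submodule (PowerSeries R) M) [Module.Projective (PowerSeries R) N] :
    Module.Projective R (↥N ⧸ (tmul N).comap N.subtype) := by
  obtain ⟨s, hs⟩ :=
    Module.projective_def.mp (inferInstance : Module.Projective (PowerSeries R) ↥N)
  set T : Submodule (PowerSeries R) ↥N := (tmul N).comap N.subtype with hT
  have hQ1k : ∀ v : (↥N ⧸ T), (X : PowerSeries R) • v = 0 := by
    intro v
    obtain ⟨n, rfl⟩ := Submodule.Quotient.mk_surjective _ v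
    rw [← Submodule.Quotient.mk_smul, Submodule.Quotient.mk_eq_zero]
    exact X_smul_mem_tmul N n.2
  let φ0 : ↥N →ₗ[R] (↥N →₀ R) :=
    (Finsupp.mapRange.linearMap (cLin (R := R))).comp (s.restrictScalars R)
  have hkill : T.restrictScalars R ≤ LinearMap.ker φ0 := by
    intro x hx
    obtain ⟨p, hp, hpx⟩ := exists_of_mem_tmul (hx : (x : M) ∈ tmul N)
    have hx' : x = (X : PowerSeries R) • (⟨p, hp⟩ : ↥N) := Subtype.ext hpx.symm
    rw [LinearMap.mem_ker, hx']
    show (Finsupp.mapRange.linearMap (cLin (R := R))) (s ((X : PowerSeries R) • ⟨p, hp⟩)) = 0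
    rw [map_smul]
    apply Finsupp.ext; intro a
    show constantCoeff (((X : PowerSeries R) • s ⟨p, hp⟩) a) = 0
    rw [Finsupp.smul_apply, smul_eq_mul, map_mul, constantCoeff_X, zero_mul]
  let φ : (↥N ⧸ T) →ₗ[R] (↥N →₀ R) :=
    (Submodule.liftQ (T.restrictScalars R) φ0 hkill).comp
      (Submodule.Quotient.restrictScalarsEquiv R T).symm.toLinearMap
  have hφmk : ∀ n : ↥N, φ (Submodule.Quotient.mk n) = φ0 n := by
    intro n
    show (Submodule.liftQ (T.restrictScalars R) φ0 hkill)
      ((Submodule.Quotient.restrictScalarsEquiv R T).symm (Submodule.Quotient.mk n)) = φ0 n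
    rw [Submodule.Quotient.restrictScalarsEquiv_symm_mk, Submodule.liftQ_apply]
  let ψ : (↥N →₀ R) →ₗ[R] (↥N ⧸ T) :=
    Finsupp.linearCombination R (fun b : ↥N => (Submodule.Quotient.mk b : ↥N ⧸ T))
  have hmain : ∀ l : ↥N →₀ PowerSeries R,
      ψ ((Finsupp.mapRange.linearMap (cLin (R := R))) l) =
        Submodule.Quotient.mk (Finsupp.linearCombination (PowerSeries R) id l) := by
    intro l
    induction l using Finsupp.induction_linear with
    | zero => simp
    | add a b ha hb => rw [map_add, map_add, ha, hb, map_add, Submodule.Quotient.mk_add]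
    | single b f =>
      rw [Finsupp.mapRange.linearMap_apply, Finsupp.mapRange_single,
        Finsupp.linearCombination_single, Finsupp.linearCombination_single, id_eq,
        Submodule.Quotient.mk_smul, smul_eq_const hQ1k]
      rfl
  refine Module.Projective.of_split φ ψ ?_
  apply LinearMap.ext; intro q
  obtain ⟨n, rfl⟩ := Submodule.Quotient.mk_surjective _ q
  rw [LinearMap.comp_apply, hφmk]
  show ψ ((Finsupp.mapRange.linearMap (cLin (R := R))) (s n)) = _
  rw [hmain, hs n, LinearMap.id_apply]

end Q1

section Main

variable {M : Type*} [AddCommGroup M]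
    [Module (PowerSeries R) M] [Module R M] [IsScalarTower R (PowerSeries R) M]
    [Module.Finite (PowerSeries R) M] [Module.Projective (PowerSeries R) M]
    (N : Submodule (PowerSeries R) M)
    [Module.Finite (PowerSeries R) N] [Module.Projective (PowerSeries R) N]

/-- the map `m ↦ X • m` viewed as a map `M → N`. -/
noncomputable def sigma (htMN : tmul (⊤ : Submodule (PowerSeries R) M) ≤ N) : M →ₗ[PowerSeries R] N where
  toFun m := ⟨(X : PowerSeries R) • m, htMN (X_smul_mem_tmul ⊤ Submodule.mem_top)⟩
  map_add' a b := Subtype.ext (smul_add _ a b)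
  map_smul' f m := Subtype.ext
    (show (X : PowerSeries R) • (f • m) = f • ((X : PowerSeries R) • m) by
      rw [smul_smul, smul_smul, mul_comm])

set_option maxHeartbeats 2000000 in
theorem main (htMN : tmul (⊤ : Submodule (PowerSeries R) M) ≤ N)
    (hMt : Module.Projective R (M ⧸ tmul (⊤ : Submodule (PowerSeries R) M))) :
    (Module.Finite R
        (↥N ⧸ (tmul (⊤ : Submodule (PowerSeries R) M)).comap N.subtype) ∧
      Module.Projective R
        (↥N ⧸ (tmul (⊤ : Submodule (PowerSeries R) M)).comap N.subtype)) ∧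
    (Module.Finite R (M ⧸ N) ∧ Module.Projective R (M ⧸ N)) ∧
    (∃ (f : (↥(tmul (⊤ : Submodule (PowerSeries R) M)) ⧸
            (tmul N).comap (tmul (⊤ : Submodule (PowerSeries R) M)).subtype) →ₗ[PowerSeries R]
            (↥N ⧸ (tmul N).comap N.subtype))
        (g : (↥N ⧸ (tmul N).comap N.subtype) →ₗ[PowerSeries R]
            (↥N ⧸ (tmul (⊤ : Submodule (PowerSeries R) M)).comap N.subtype)),
      Function.Injective f ∧ Function.Surjective g ∧ Function.Exact f g ∧
      (∀ x : ↥(tmul (⊤ : Submodule (PowerSeries R) M)),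
        f (Submodule.Quotient.mk x) =
          Submodule.Quotient.mk (⟨(x : M), htMN x.2⟩ : ↥N)) ∧
      (∀ x : ↥N, g (Submodule.Quotient.mk x) = Submodule.Quotient.mk x)) ∧
    (∃ (f₂ : (↥N ⧸ (tmul (⊤ : Submodule (PowerSeries R) M)).comap N.subtype) →ₗ[PowerSeries R]
            (M ⧸ tmul (⊤ : Submodule (PowerSeries R) M)))
        (g₂ : (M ⧸ tmul (⊤ : Submodule (PowerSeries R) M)) →ₗ[PowerSeries R] (M ⧸ N)),
      Function.Injective f₂ ∧ Function.Surjective g₂ ∧ Function.Exact f₂ g₂ ∧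
      (∀ x : ↥N, f₂ (Submodule.Quotient.mk x) = Submodule.Quotient.mk (x : M)) ∧
      (∀ m : M, g₂ (Submodule.Quotient.mk m) = Submodule.Quotient.mk m)) := by
  classical
  -- basic maps
  let σ : M →ₗ[PowerSeries R] ↥N := sigma N htMN
  have hσval : ∀ m : M, ((σ m : ↥N) : M) = (X : PowerSeries R) • m := fun m => rfl
  let dbar : (↥N ⧸ (tmul N).comap N.subtype) →ₗ[PowerSeries R]
      (M ⧸ tmul (⊤ : Submodule (PowerSeries R) M)) :=
    Submodule.mapQ _ _ N.subtype (fun x hx => tmul_mono le_top hx)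
  have hdbar : ∀ n : ↥N, dbar (Submodule.Quotient.mk n) = Submodule.Quotient.mk (n : M) :=
    fun n => Submodule.mapQ_apply _ _ _ n
  let sbar : (M ⧸ tmul (⊤ : Submodule (PowerSeries R) M)) →ₗ[PowerSeries R]
      (↥N ⧸ (tmul N).comap N.subtype) :=
    Submodule.mapQ _ _ σ (fun m hm => X_smul_mem_tmul N (htMN hm))
  have hsbar : ∀ m : M, sbar (Submodule.Quotient.mk m) = Submodule.Quotient.mk (σ m) :=
    fun m => Submodule.mapQ_apply _ _ _ m
  let θ : (↥N ⧸ (tmul N).comap N.subtype) →ₗ[PowerSeries R]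
      (↥N ⧸ (tmul (⊤ : Submodule (PowerSeries R) M)).comap N.subtype) :=
    Submodule.mapQ _ _ LinearMap.id (fun x hx => tmul_mono le_top hx)
  have hθ : ∀ n : ↥N, θ (Submodule.Quotient.mk n) = Submodule.Quotient.mk n :=
    fun n => Submodule.mapQ_apply _ _ _ n
  let dbar' : (↥N ⧸ (tmul (⊤ : Submodule (PowerSeries R) M)).comap N.subtype) →ₗ[PowerSeries R]
      (M ⧸ tmul (⊤ : Submodule (PowerSeries R) M)) :=
    Submodule.mapQ _ _ N.subtype (fun x hx => hx)
  have hdbar' : ∀ n : ↥N, dbar' (Submodule.Quotient.mk n) = Submodule.Quotient.mk (n : M) :=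
    fun n => Submodule.mapQ_apply _ _ _ n
  let g2 : (M ⧸ tmul (⊤ : Submodule (PowerSeries R) M)) →ₗ[PowerSeries R] (M ⧸ N) :=
    Submodule.mapQ _ _ LinearMap.id (fun m hm => htMN hm)
  have hg2 : ∀ m : M, g2 (Submodule.Quotient.mk m) = Submodule.Quotient.mk m :=
    fun m => Submodule.mapQ_apply _ _ _ m
  let f1 : (↥(tmul (⊤ : Submodule (PowerSeries R) M)) ⧸
      (tmul N).comap (tmul (⊤ : Submodule (PowerSeries R) M)).subtype) →ₗ[PowerSeries R]
      (↥N ⧸ (tmul N).comap N.subtype) :=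
    Submodule.mapQ _ _ (Submodule.inclusion htMN) (fun x hx => hx)
  have hf1 : ∀ x : ↥(tmul (⊤ : Submodule (PowerSeries R) M)),
      f1 (Submodule.Quotient.mk x) = Submodule.Quotient.mk (Submodule.inclusion htMN x) :=
    fun x => Submodule.mapQ_apply _ _ _ x
  -- killedness
  have hQ0k : ∀ v : (M ⧸ tmul (⊤ : Submodule (PowerSeries R) M)),
      (X : PowerSeries R) • v = 0 := by
    intro v
    obtain ⟨m, rfl⟩ := Submodule.Quotient.mk_surjective _ v
    rw [← Submodule.Quotient.mk_smul, Submodule.Quotient.mk_eq_zero]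
    exact X_smul_mem_tmul ⊤ Submodule.mem_top
  have hQ1k : ∀ v : (↥N ⧸ (tmul N).comap N.subtype), (X : PowerSeries R) • v = 0 := by
    intro v
    obtain ⟨n, rfl⟩ := Submodule.Quotient.mk_surjective _ v
    rw [← Submodule.Quotient.mk_smul, Submodule.Quotient.mk_eq_zero]
    exact X_smul_mem_tmul N n.2
  have hAk : ∀ v : (↥N ⧸ (tmul (⊤ : Submodule (PowerSeries R) M)).comap N.subtype),
      (X : PowerSeries R) • v = 0 := by
    intro v
    obtain ⟨n, rfl⟩ := Submodule.Quotient.mk_surjective _ v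
    rw [← Submodule.Quotient.mk_smul, Submodule.Quotient.mk_eq_zero]
    exact X_smul_mem_tmul ⊤ Submodule.mem_top
  have hBk : ∀ v : (M ⧸ N), (X : PowerSeries R) • v = 0 := by
    intro v
    obtain ⟨m, rfl⟩ := Submodule.Quotient.mk_surjective _ v
    rw [← Submodule.Quotient.mk_smul, Submodule.Quotient.mk_eq_zero]
    exact htMN (X_smul_mem_tmul ⊤ Submodule.mem_top)
  -- injectivity of X-multiplication
  have hinjM : ∀ p : M, (X : PowerSeries R) • p = 0 → p = 0 := fun p h => X_smul_inj h
  have hinjN : ∀ p : ↥N, (X : PowerSeries R) • p = 0 → p = 0 := fun p h => X_smul_inj h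
  -- projectivity of the two middle terms
  haveI hPQ0 : Module.Projective R (M ⧸ tmul (⊤ : Submodule (PowerSeries R) M)) := hMt
  haveI hPQ1 : Module.Projective R (↥N ⧸ (tmul N).comap N.subtype) := projQ1 N
  -- sections
  obtain ⟨s0, hs0c⟩ := Module.projective_lifting_property
    ((tmul (⊤ : Submodule (PowerSeries R) M)).mkQ.restrictScalars R) LinearMap.id
    (fun q => Submodule.Quotient.mk_surjective _ q)
  have hs0 : ∀ q, Submodule.Quotient.mk (s0 q) = q := fun q => LinearMap.congr_fun hs0c q
  obtain ⟨s1, hs1c⟩ := Module.projective_lifting_property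
    (((tmul N).comap N.subtype).mkQ.restrictScalars R) LinearMap.id
    (fun q => Submodule.Quotient.mk_surjective _ q)
  have hs1 : ∀ q, Submodule.Quotient.mk (s1 q) = q := fun q => LinearMap.congr_fun hs1c q
  -- division by X : construction of σ₁ and d₁
  let τσ : (M ⧸ tmul (⊤ : Submodule (PowerSeries R) M)) →ₗ[R] ↥N :=
    (σ.restrictScalars R).comp s0 - s1.comp (sbar.restrictScalars R)
  have hτσval : ∀ q, τσ q = σ (s0 q) - s1 (sbar q) := fun q => rfl
  have hτσ : ∀ q, ∃ p : ↥N, (X : PowerSeries R) • p = τσ q := by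
    intro q
    have h1 : Submodule.Quotient.mk (p := (tmul N).comap N.subtype) (τσ q) = 0 := by
      rw [hτσval, Submodule.Quotient.mk_sub, ← hsbar, hs0, hs1, sub_self]
    rw [Submodule.Quotient.mk_eq_zero] at h1
    obtain ⟨p, hp, hpx⟩ := exists_of_mem_tmul (h1 : ((τσ q : ↥N) : M) ∈ tmul N)
    exact ⟨⟨p, hp⟩, Subtype.ext hpx⟩
  let xdiv := divFun hinjN τσ hτσ
  have hx : ∀ q, (X : PowerSeries R) • xdiv q = σ (s0 q) - s1 (sbar q) :=
    fun q => divFun_spec hinjN τσ hτσ q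
  let σ1 : (M ⧸ tmul (⊤ : Submodule (PowerSeries R) M)) →ₗ[R]
      (↥N ⧸ (tmul N).comap N.subtype) :=
    ((((tmul N).comap N.subtype).mkQ).restrictScalars R).comp xdiv
  have hσ1 : ∀ q, σ1 q = Submodule.Quotient.mk (xdiv q) := fun q => rfl
  let τd : (↥N ⧸ (tmul N).comap N.subtype) →ₗ[R] M :=
    (N.subtype.restrictScalars R).comp s1 - s0.comp (dbar.restrictScalars R)
  have hτdval : ∀ q, τd q = (s1 q : M) - s0 (dbar q) := fun q => rfl
  have hτd : ∀ q, ∃ p : M, (X : PowerSeries R) • p = τd q := by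
    intro q
    have h1 : Submodule.Quotient.mk (p := tmul (⊤ : Submodule (PowerSeries R) M)) (τd q) = 0 := by
      rw [hτdval, Submodule.Quotient.mk_sub, ← hdbar, hs0, hs1, sub_self]
    rw [Submodule.Quotient.mk_eq_zero] at h1
    obtain ⟨p, _, hpx⟩ := exists_of_mem_tmul h1
    exact ⟨p, hpx⟩
  let ydiv := divFun hinjM τd hτd
  have hy : ∀ q, (X : PowerSeries R) • ydiv q = (s1 q : M) - s0 (dbar q) :=
    fun q => divFun_spec hinjM τd hτd q
  let d1 : (↥N ⧸ (tmul N).comap N.subtype) →ₗ[R]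
      (M ⧸ tmul (⊤ : Submodule (PowerSeries R) M)) :=
    (((tmul (⊤ : Submodule (PowerSeries R) M)).mkQ).restrictScalars R).comp ydiv
  have hd1 : ∀ q, d1 q = Submodule.Quotient.mk (ydiv q) := fun q => rfl
  -- composites vanish
  have hds : ∀ q, dbar (sbar q) = 0 := by
    intro q
    obtain ⟨m, rfl⟩ := Submodule.Quotient.mk_surjective _ q
    rw [hsbar, hdbar, Submodule.Quotient.mk_eq_zero]
    exact X_smul_mem_tmul ⊤ Submodule.mem_top
  have hsd : ∀ q, sbar (dbar q) = 0 := by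
    intro q
    obtain ⟨n, rfl⟩ := Submodule.Quotient.mk_surjective _ q
    rw [hdbar, hsbar, Submodule.Quotient.mk_eq_zero]
    exact X_smul_mem_tmul N n.2
  have hθs : ∀ q, θ (sbar q) = 0 := by
    intro q
    obtain ⟨m, rfl⟩ := Submodule.Quotient.mk_surjective _ q
    rw [hsbar, hθ, Submodule.Quotient.mk_eq_zero]
    exact X_smul_mem_tmul ⊤ Submodule.mem_top
  have hgd : ∀ q, g2 (dbar q) = 0 := by
    intro q
    obtain ⟨n, rfl⟩ := Submodule.Quotient.mk_surjective _ q
    rw [hdbar, hg2, Submodule.Quotient.mk_eq_zero]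
    exact n.2
  -- key identity (III) : σ̄ d₁ + σ₁ d̄ = id on Q1
  have hIII : ∀ q, sbar (d1 q) + σ1 (dbar q) = q := by
    intro q
    have h1 : (X : PowerSeries R) • ydiv q = (s1 q : M) - s0 (dbar q) := hy q
    have h2 : (X : PowerSeries R) • xdiv (dbar q) = σ (s0 (dbar q)) := by
      rw [hx, hsd, map_zero, sub_zero]
    have hXs1 : (X : PowerSeries R) • s1 q = σ ((s1 q : M)) := Subtype.ext rfl
    have h3 : xdiv (dbar q) = s1 q - σ (ydiv q) := by
      have h5 : (X : PowerSeries R) • σ (ydiv q) = σ ((s1 q : M)) - σ (s0 (dbar q)) := by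
        rw [← map_smul, h1, map_sub]
      have h4 : (X : PowerSeries R) • (xdiv (dbar q) - (s1 q - σ (ydiv q))) = 0 := by
        rw [smul_sub, smul_sub, h2, hXs1, h5]
        abel
      have h6 := hinjN _ h4
      rwa [sub_eq_zero] at h6
    rw [hd1, hσ1, hsbar, h3, Submodule.Quotient.mk_sub, hs1]
    abel
  -- key identity (II) : d̄ σ₁ + d₁ σ̄ = id on Q0
  have hII : ∀ q, dbar (σ1 q) + d1 (sbar q) = q := by
    intro q
    have h1 : (X : PowerSeries R) • xdiv q = σ (s0 q) - s1 (sbar q) := hx q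
    have h2 : (X : PowerSeries R) • ydiv (sbar q) = (s1 (sbar q) : M) := by
      rw [hy, hds, map_zero, sub_zero]
    have h3 : ydiv (sbar q) = s0 q - (xdiv q : M) := by
      have h5 : (X : PowerSeries R) • (xdiv q : M)
          = (X : PowerSeries R) • s0 q - (s1 (sbar q) : M) := by
        have h7 := congrArg (Subtype.val) h1
        simpa [hσval] using h7
      have h4 : (X : PowerSeries R) • (ydiv (sbar q) - (s0 q - (xdiv q : M))) = 0 := by
        rw [smul_sub, smul_sub, h2, h5]
        abel
      have h6 := hinjM _ h4
      rwa [sub_eq_zero] at h6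
    rw [hσ1, hd1, hdbar, h3, Submodule.Quotient.mk_sub, hs0]
    abel
  -- finiteness
  haveI : Module.Finite (PowerSeries R)
      (↥N ⧸ (tmul (⊤ : Submodule (PowerSeries R) M)).comap N.subtype) :=
    Module.Finite.of_surjective
      ((tmul (⊤ : Submodule (PowerSeries R) M)).comap N.subtype).mkQ
      (Submodule.Quotient.mk_surjective _)
  have finA : Module.Finite R
      (↥N ⧸ (tmul (⊤ : Submodule (PowerSeries R) M)).comap N.subtype) :=
    finite_of_killed hAk
  haveI : Module.Finite (PowerSeries R) (M ⧸ N) :=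
    Module.Finite.of_surjective N.mkQ (Submodule.Quotient.mk_surjective _)
  have finB : Module.Finite R (M ⧸ N) := finite_of_killed hBk
  -- projectivity of N/tM
  have rAcomp : ∀ a, θ (σ1 (dbar' a)) = a := by
    intro a
    obtain ⟨n, rfl⟩ := Submodule.Quotient.mk_surjective _ a
    have h1 : dbar' (Submodule.Quotient.mk n) = dbar (Submodule.Quotient.mk n) := by
      rw [hdbar, hdbar']
    rw [h1]
    have h2 := hIII (Submodule.Quotient.mk n)
    have h3 : σ1 (dbar (Submodule.Quotient.mk n)) =
        Submodule.Quotient.mk n - sbar (d1 (Submodule.Quotient.mk n)) :=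
      eq_sub_of_add_eq' h2
    rw [h3, map_sub, hθs, hθ, sub_zero]
  have projA : Module.Projective R
      (↥N ⧸ (tmul (⊤ : Submodule (PowerSeries R) M)).comap N.subtype) :=
    Module.Projective.of_split (dbar'.restrictScalars R) ((θ.restrictScalars R).comp σ1)
      (LinearMap.ext rAcomp)
  -- projectivity of M/N
  let eS : (M ⧸ tmul (⊤ : Submodule (PowerSeries R) M)) →ₗ[PowerSeries R]
      (M ⧸ tmul (⊤ : Submodule (PowerSeries R) M)) :=
    RtoS hQ0k hQ0k ((dbar.restrictScalars R).comp σ1)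
  have heS : ∀ q, eS q = dbar (σ1 q) := fun q => rfl
  let u : M →ₗ[PowerSeries R] (M ⧸ tmul (⊤ : Submodule (PowerSeries R) M)) :=
    (LinearMap.id - eS).comp (tmul (⊤ : Submodule (PowerSeries R) M)).mkQ
  have hu : ∀ m : M, u m = Submodule.Quotient.mk m - eS (Submodule.Quotient.mk m) :=
    fun m => rfl
  have hker : N ≤ LinearMap.ker u := by
    intro n hn
    rw [LinearMap.mem_ker, hu]
    have h1 : (Submodule.Quotient.mk n : M ⧸ tmul (⊤ : Submodule (PowerSeries R) M))
        = dbar (Submodule.Quotient.mk (⟨n, hn⟩ : ↥N)) := (hdbar ⟨n, hn⟩).symm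
    rw [heS, h1]
    have h2 := hIII (Submodule.Quotient.mk (⟨n, hn⟩ : ↥N))
    have h3 : σ1 (dbar (Submodule.Quotient.mk (⟨n, hn⟩ : ↥N))) =
        Submodule.Quotient.mk (⟨n, hn⟩ : ↥N)
          - sbar (d1 (Submodule.Quotient.mk (⟨n, hn⟩ : ↥N))) :=
      eq_sub_of_add_eq' h2
    rw [h3, map_sub, hds, sub_zero, sub_self]
  let ν : (M ⧸ N) →ₗ[PowerSeries R] (M ⧸ tmul (⊤ : Submodule (PowerSeries R) M)) :=
    Submodule.liftQ N u hker
  have hν : ∀ m : M, ν (Submodule.Quotient.mk m)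
      = Submodule.Quotient.mk m - eS (Submodule.Quotient.mk m) :=
    fun m => Submodule.liftQ_apply _ _ _
  have hg2ν : ∀ b, g2 (ν b) = b := by
    intro b
    obtain ⟨m, rfl⟩ := Submodule.Quotient.mk_surjective _ b
    rw [hν, map_sub, hg2, heS, hgd, sub_zero]
  have projB : Module.Projective R (M ⧸ N) :=
    Module.Projective.of_split (ν.restrictScalars R) (g2.restrictScalars R)
      (LinearMap.ext hg2ν)
  -- first exact sequence
  have injf1 : Function.Injective f1 := by
    refine LinearMap.ker_eq_bot.mp ?_
    rw [eq_bot_iff]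
    intro a ha
    obtain ⟨x, rfl⟩ := Submodule.Quotient.mk_surjective _ a
    rw [LinearMap.mem_ker, hf1, Submodule.Quotient.mk_eq_zero] at ha
    rw [Submodule.mem_bot, Submodule.Quotient.mk_eq_zero]
    exact ha
  have surjθ : Function.Surjective θ := by
    intro a
    obtain ⟨n, rfl⟩ := Submodule.Quotient.mk_surjective _ a
    exact ⟨Submodule.Quotient.mk n, hθ n⟩
  have exact1 : Function.Exact f1 θ := by
    rw [LinearMap.exact_iff]
    ext q
    constructor
    · intro hq
      obtain ⟨n, rfl⟩ := Submodule.Quotient.mk_surjective _ q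
      rw [LinearMap.mem_ker, hθ, Submodule.Quotient.mk_eq_zero] at hq
      refine ⟨Submodule.Quotient.mk (⟨(n : M), hq⟩ : ↥(tmul (⊤ : Submodule (PowerSeries R) M))), ?_⟩
      rw [hf1]
      exact congrArg _ (Subtype.ext rfl)
    · rintro ⟨z, rfl⟩
      obtain ⟨x, rfl⟩ := Submodule.Quotient.mk_surjective _ z
      rw [LinearMap.mem_ker, hf1, hθ, Submodule.Quotient.mk_eq_zero]
      exact x.2
  have form1 : ∀ x : ↥(tmul (⊤ : Submodule (PowerSeries R) M)),
      f1 (Submodule.Quotient.mk x) = Submodule.Quotient.mk (⟨(x : M), htMN x.2⟩ : ↥N) := by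
    intro x
    rw [hf1]
    exact congrArg _ (Subtype.ext rfl)
  -- second exact sequence
  have injf2 : Function.Injective dbar' := by
    refine LinearMap.ker_eq_bot.mp ?_
    rw [eq_bot_iff]
    intro a ha
    obtain ⟨n, rfl⟩ := Submodule.Quotient.mk_surjective _ a
    rw [LinearMap.mem_ker, hdbar', Submodule.Quotient.mk_eq_zero] at ha
    rw [Submodule.mem_bot, Submodule.Quotient.mk_eq_zero]
    exact ha
  have surjg2 : Function.Surjective g2 := by
    intro b
    obtain ⟨m, rfl⟩ := Submodule.Quotient.mk_surjective _ b
    exact ⟨Submodule.Quotient.mk m, hg2 m⟩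
  have exact2 : Function.Exact dbar' g2 := by
    rw [LinearMap.exact_iff]
    ext q
    constructor
    · intro hq
      obtain ⟨m, rfl⟩ := Submodule.Quotient.mk_surjective _ q
      rw [LinearMap.mem_ker, hg2, Submodule.Quotient.mk_eq_zero] at hq
      exact ⟨Submodule.Quotient.mk (⟨m, hq⟩ : ↥N), hdbar' _⟩
    · rintro ⟨z, rfl⟩
      obtain ⟨n, rfl⟩ := Submodule.Quotient.mk_surjective _ z
      rw [LinearMap.mem_ker, hdbar', hg2, Submodule.Quotient.mk_eq_zero]
      exact n.2
  exact ⟨⟨finA, projA⟩, ⟨finB, projB⟩,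
    ⟨f1, θ, injf1, surjθ, exact1, form1, hθ⟩,
    ⟨dbar', g2, injf2, surjg2, exact2, hdbar', hg2⟩⟩

end Main

end Stmt17Aux

/-- Let `R` be a commutative ring, `R[[t]]` the power series ring, and
`N ⊆ M` finite projective `R[[t]]`-modules with `tM ⊆ N ⊆ M`, such that `M/tM` is
projective over `R` and `N` is projective over `R[[t]]`.  Then the `R`-modules `N/tM`
and `M/N` are finite projective over `R`, and there are short exact sequences
`0 → tM/tN → N/tN → N/tM → 0` and `0 → N/tM → M/tM → M/N → 0` (given by the canonical
inclusions and projections). -/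
theorem stmt17 {R : Type*} [CommRing R] {M : Type*} [AddCommGroup M]
    [Module (PowerSeries R) M] [Module R M] [IsScalarTower R (PowerSeries R) M]
    [Module.Finite (PowerSeries R) M] [Module.Projective (PowerSeries R) M]
    (N : Submodule (PowerSeries R) M)
    [Module.Finite (PowerSeries R) N] [Module.Projective (PowerSeries R) N]
    (htMN : tmul (⊤ : Submodule (PowerSeries R) M) ≤ N)
    (hMt : Module.Projective R (M ⧸ tmul (⊤ : Submodule (PowerSeries R) M))) :
    (Module.Finite R
        (↥N ⧸ (tmul (⊤ : Submodule (PowerSeries R) M)).comap N.subtype) ∧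
      Module.Projective R
        (↥N ⧸ (tmul (⊤ : Submodule (PowerSeries R) M)).comap N.subtype)) ∧
    (Module.Finite R (M ⧸ N) ∧ Module.Projective R (M ⧸ N)) ∧
    (∃ (f : (↥(tmul (⊤ : Submodule (PowerSeries R) M)) ⧸
            (tmul N).comap (tmul (⊤ : Submodule (PowerSeries R) M)).subtype) →ₗ[PowerSeries R]
            (↥N ⧸ (tmul N).comap N.subtype))
        (g : (↥N ⧸ (tmul N).comap N.subtype) →ₗ[PowerSeries R]
            (↥N ⧸ (tmul (⊤ : Submodule (PowerSeries R) M)).comap N.subtype)),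
      Function.Injective f ∧ Function.Surjective g ∧ Function.Exact f g ∧
      (∀ x : ↥(tmul (⊤ : Submodule (PowerSeries R) M)),
        f (Submodule.Quotient.mk x) =
          Submodule.Quotient.mk (⟨(x : M), htMN x.2⟩ : ↥N)) ∧
      (∀ x : ↥N, g (Submodule.Quotient.mk x) = Submodule.Quotient.mk x)) ∧
    (∃ (f₂ : (↥N ⧸ (tmul (⊤ : Submodule (PowerSeries R) M)).comap N.subtype) →ₗ[PowerSeries R]
            (M ⧸ tmul (⊤ : Submodule (PowerSeries R) M)))
        (g₂ : (M ⧸ tmul (⊤ : Submodule (PowerSeries R) M)) →ₗ[PowerSeries R] (M ⧸ N)),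
      Function.Injective f₂ ∧ Function.Surjective g₂ ∧ Function.Exact f₂ g₂ ∧
      (∀ x : ↥N, f₂ (Submodule.Quotient.mk x) = Submodule.Quotient.mk (x : M)) ∧
      (∀ m : M, g₂ (Submodule.Quotient.mk m) = Submodule.Quotient.mk m)) := by
  exact Stmt17Aux.main N htMN hMt
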